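/- Let Γ = I_{r²} − r^{-1} vec(I_r) vec(I_r)ᵀ and K_{r,r} the commutation matrix. Then Σ₀ := Γ · ((I_{r²} + K_{r,r})/2) · Γ equals (1/2)(I_{r²} + K_{r,r} − (2/r) vec(I_r) vec(I_r)ᵀ), and Σ₀ is symmetric and idempotent with rank (r−1)(r+2)/2. -/

import Mathlib

open Matrix

/-- `vec(I_r)` as a function on pair indices. -/
noncomputable def vecIdFun (r : ℕ) : Fin r × Fin r → ℝ :=
  fun ij => if ij.1 = ij.2 then 1 else 0

/-- The commutation matrix `K_{r,r} = Σ_{i,j} (e_i e_jᵀ) ⊗ (e_j e_iᵀ)`. -/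
noncomputable def commMat (r : ℕ) : Matrix (Fin r × Fin r) (Fin r × Fin r) ℝ :=
  fun ij kl => if ij.1 = kl.2 ∧ ij.2 = kl.1 then 1 else 0

/-- The centering projection `Γ = I_{r²} − r⁻¹ vec(I_r) vec(I_r)ᵀ`. -/
noncomputable def centerMat (r : ℕ) : Matrix (Fin r × Fin r) (Fin r × Fin r) ℝ :=
  1 - (r : ℝ)⁻¹ • Matrix.vecMulVec (vecIdFun r) (vecIdFun r)

lemma stmt6_hKK (r : ℕ) : commMat r * commMat r = 1 := by
  ext ⟨i, j⟩ ⟨k, l⟩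
  simp [Matrix.mul_apply, commMat, Fintype.sum_prod_type, Matrix.one_apply,
    Prod.ext_iff, ite_and, eq_comm, and_comm]

lemma stmt6_hKV (r : ℕ) : commMat r * Matrix.vecMulVec (vecIdFun r) (vecIdFun r)
    = Matrix.vecMulVec (vecIdFun r) (vecIdFun r) := by
  ext ⟨i, j⟩ ⟨k, l⟩
  simp [Matrix.mul_apply, commMat, vecIdFun, vecMulVec_apply, Fintype.sum_prod_type,
    ite_and, eq_comm]

lemma stmt6_hVK (r : ℕ) : Matrix.vecMulVec (vecIdFun r) (vecIdFun r) * commMat r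
    = Matrix.vecMulVec (vecIdFun r) (vecIdFun r) := by
  ext ⟨i, j⟩ ⟨k, l⟩
  simp [Matrix.mul_apply, commMat, vecIdFun, vecMulVec_apply, Fintype.sum_prod_type,
    ite_and, eq_comm, and_comm]

lemma stmt6_hVV (r : ℕ) : Matrix.vecMulVec (vecIdFun r) (vecIdFun r) *
    Matrix.vecMulVec (vecIdFun r) (vecIdFun r)
    = (r : ℝ) • Matrix.vecMulVec (vecIdFun r) (vecIdFun r) := by
  ext ⟨i, j⟩ ⟨k, l⟩
  simp [Matrix.mul_apply, vecIdFun, vecMulVec_apply, Fintype.sum_prod_type,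
    ite_and, mul_comm, Finset.mul_sum]

lemma stmt6_rank_aux (r : ℕ) (M : Matrix (Fin r × Fin r) (Fin r × Fin r) ℝ)
    (hidem : M * M = M) (htr : M.trace = ((r-1)*(r+2)/2 : ℕ)) :
    M.rank = (r - 1) * (r + 2) / 2 := by
  have hproj : M.mulVecLin ∘ₗ M.mulVecLin = M.mulVecLin := by
    rw [← Matrix.mulVecLin_mul, hidem]
  obtain ⟨p, hp⟩ := (LinearMap.isProj_iff_isIdempotentElem M.mulVecLin).mpr (by rw [IsIdempotentElem, Module.End.mul_eq_comp]; exact hproj)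
  have hrange : LinearMap.range M.mulVecLin = p := by
    apply le_antisymm
    · rintro x ⟨y, rfl⟩; exact hp.map_mem y
    · intro x hx; exact ⟨x, hp.map_id x hx⟩
  have htrace : LinearMap.trace ℝ _ M.mulVecLin = Matrix.trace M := by
    rw [LinearMap.trace_eq_matrix_trace ℝ (Pi.basisFun ℝ (Fin r × Fin r)),
      LinearMap.toMatrix_eq_toMatrix', ← Matrix.toLin'_apply', LinearMap.toMatrix'_toLin']
  have := hp.trace
  rw [htrace, htr] at this
  have hrank : M.rank = Module.finrank ℝ p := by
    rw [Matrix.rank, hrange]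
  rw [hrank]
  exact_mod_cast this.symm

set_option maxHeartbeats 1000000 in
/-- `Σ₀ = Γ ((I + K)/2) Γ` equals `(I + K − (2/r) vec(I)vec(I)ᵀ)/2`, and is
symmetric idempotent of rank `(r−1)(r+2)/2`. -/
theorem stmt6 (r : ℕ) (hr : 1 ≤ r) :
    centerMat r * ((2 : ℝ)⁻¹ • (1 + commMat r)) * centerMat r =
        (2 : ℝ)⁻¹ • (1 + commMat r -
          (2 / (r : ℝ)) • Matrix.vecMulVec (vecIdFun r) (vecIdFun r)) ∧
      (centerMat r * ((2 : ℝ)⁻¹ • (1 + commMat r)) * centerMat r).IsSymm ∧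
      (centerMat r * ((2 : ℝ)⁻¹ • (1 + commMat r)) * centerMat r) *
          (centerMat r * ((2 : ℝ)⁻¹ • (1 + commMat r)) * centerMat r) =
        centerMat r * ((2 : ℝ)⁻¹ • (1 + commMat r)) * centerMat r ∧
      (centerMat r * ((2 : ℝ)⁻¹ • (1 + commMat r)) * centerMat r).rank =
        (r - 1) * (r + 2) / 2 := by
  have hr0 : (r : ℝ) ≠ 0 := Nat.cast_ne_zero.mpr (by omega)
  have hmain : centerMat r * ((2 : ℝ)⁻¹ • (1 + commMat r)) * centerMat r =
      (2 : ℝ)⁻¹ • (1 + commMat r) -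
        (r : ℝ)⁻¹ • Matrix.vecMulVec (vecIdFun r) (vecIdFun r) := by
    rw [centerMat]
    simp only [sub_mul, mul_sub, one_mul, mul_one, smul_mul_assoc, mul_smul_comm,
      mul_add, add_mul, mul_assoc, stmt6_hKK, stmt6_hKV, stmt6_hVK, stmt6_hVV,
      smul_add, smul_smul, smul_sub]
    match_scalars <;> field_simp <;> ring
  have heq : centerMat r * ((2 : ℝ)⁻¹ • (1 + commMat r)) * centerMat r =
      (2 : ℝ)⁻¹ • (1 + commMat r -
        (2 / (r : ℝ)) • Matrix.vecMulVec (vecIdFun r) (vecIdFun r)) := by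
    rw [hmain]
    match_scalars <;> field_simp
  refine ⟨heq, ?_, ?_, ?_⟩
  · rw [hmain]
    unfold Matrix.IsSymm
    ext ⟨i, j⟩ ⟨k, l⟩
    simp [Matrix.one_apply, commMat, vecIdFun, vecMulVec_apply, Prod.ext_iff,
      eq_comm, and_comm, mul_comm]
  · rw [hmain]
    simp only [sub_mul, mul_sub, one_mul, mul_one, smul_mul_assoc, mul_smul_comm,
      mul_add, add_mul, mul_assoc, stmt6_hKK, stmt6_hKV, stmt6_hVK, stmt6_hVV,
      smul_add, smul_smul, smul_sub]
    match_scalars <;> field_simp <;> ring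
  · apply stmt6_rank_aux
    · rw [hmain]
      simp only [sub_mul, mul_sub, one_mul, mul_one, smul_mul_assoc, mul_smul_comm,
        mul_add, add_mul, mul_assoc, stmt6_hKK, stmt6_hKV, stmt6_hVK, stmt6_hVV,
        smul_add, smul_smul, smul_sub]
      match_scalars <;> field_simp <;> ring
    · rw [hmain]
      have htK : (commMat r).trace = (r : ℝ) := by
        have h : ∀ i j : Fin r, ((i = j ∧ j = i)) = (i = j) := by
          intro i j; ext; exact ⟨fun h => h.1, fun h => ⟨h, h.symm⟩⟩
        simp only [Matrix.trace, Matrix.diag, commMat, h]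
        rw [Fintype.sum_prod_type]
        simp [Finset.sum_ite_eq]
      have htV : (Matrix.vecMulVec (vecIdFun r) (vecIdFun r)).trace = (r : ℝ) := by
        simp [Matrix.trace, Matrix.diag, vecIdFun, vecMulVec_apply,
          Fintype.sum_prod_type, ite_and, mul_ite]
      have hcast : (((r - 1) * (r + 2) / 2 : ℕ) : ℝ)
          = ((r : ℝ) - 1) * ((r : ℝ) + 2) / 2 := by
        have h2 : 2 ∣ (r - 1) * (r + 2) := by
          rcases Nat.even_or_odd r with he | ho
          · exact Dvd.dvd.mul_left (he.add (even_two)).two_dvd _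
          · exact Dvd.dvd.mul_right ((Nat.Odd.sub_odd ho odd_one).two_dvd) _
        rw [Nat.cast_div h2 (by norm_num), Nat.cast_mul, Nat.cast_sub hr]
        push_cast
        ring
      rw [Matrix.trace_sub, Matrix.trace_smul, Matrix.trace_smul, Matrix.trace_add,
        Matrix.trace_one, htK, htV, hcast]
      simp only [Fintype.card_prod, Fintype.card_fin]
      field_simp
      rw [smul_eq_mul, smul_eq_mul, one_div_mul_cancel hr0]
      push_cast
      ring
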